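/- Let b ∈ ℂ^n be a unit vector, W ∈ ℂ^{n×k} a matrix of full column rank, M ∈ ℂ^{n×n} Hermitian positive definite, and suppose the residual r := b − W (W* M W)^{-1} W* M b is nonzero. Let B := [b, W] ∈ ℂ^{n×(k+1)} have full column rank. Then ‖r‖_M = ‖B (B* M B)^{-1} e_1‖_M^{-1}, where e_1 is the first standard basis vector of ℂ^{k+1} and ‖x‖_M = sqrt(x* M x). -/

import Mathlib

open Matrix ComplexOrder

lemma aux_posdef {n m : ℕ} {M : Matrix (Fin n) (Fin n) ℂ} (hM : M.PosDef)
    (A : Matrix (Fin n) (Fin m) ℂ) (hA : Function.Injective A.mulVec) :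
    (Aᴴ * M * A).PosDef := by
  refine Matrix.PosDef.of_dotProduct_mulVec_pos (Matrix.isHermitian_conjTranspose_mul_mul A hM.1) fun x hx => ?_
  have h1 : (Aᴴ * M * A) *ᵥ x = Aᴴ *ᵥ (M *ᵥ (A *ᵥ x)) := by
    rw [← Matrix.mulVec_mulVec, ← Matrix.mulVec_mulVec]
  rw [h1, Matrix.dotProduct_mulVec, ← Matrix.star_mulVec]
  refine hM.dotProduct_mulVec_pos fun h0 => hx (hA ?_)
  rw [h0, Matrix.mulVec_zero]


/-- Let `b ∈ ℂⁿ` be a unit vector, `W ∈ ℂ^{n×k}` of full column rank,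
`M` Hermitian positive definite, and suppose the residual
`r = b - W (W* M W)⁻¹ W* M b` is nonzero.  With `B = [b, W] ∈ ℂ^{n×(k+1)}` of full column
rank, one has `‖r‖_M = ‖B (B* M B)⁻¹ e₁‖_M⁻¹`, where `e₁` is the first standard basis
vector of `ℂ^{k+1}` and `‖x‖_M = sqrt (x* M x)`. -/
theorem stmt19 (n k : ℕ) (b : Fin n → ℂ) (hb : ∑ i, ‖b i‖ ^ 2 = 1)
    (W : Matrix (Fin n) (Fin k) ℂ)
    (hWrank : LinearIndependent ℂ (fun j : Fin k => (Wᵀ : Matrix (Fin k) (Fin n) ℂ) j))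
    (M : Matrix (Fin n) (Fin n) ℂ) (hM : M.PosDef)
    (r : Fin n → ℂ)
    (hrdef : r = b - W *ᵥ ((Wᴴ * M * W)⁻¹ *ᵥ (Wᴴ *ᵥ (M *ᵥ b))))
    (hr : r ≠ 0)
    (B : Matrix (Fin n) (Fin (k + 1)) ℂ)
    (hB : B = Matrix.of fun i j => Fin.cases (b i) (fun j' => W i j') j)
    (hBrank : LinearIndependent ℂ (fun j : Fin (k + 1) => (Bᵀ : Matrix (Fin (k + 1)) (Fin n) ℂ) j)) :
    Real.sqrt ((star r ⬝ᵥ M *ᵥ r).re) =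
      (Real.sqrt
        ((star (B *ᵥ ((Bᴴ * M * B)⁻¹ *ᵥ Pi.single (0 : Fin (k + 1)) (1 : ℂ))) ⬝ᵥ
          M *ᵥ (B *ᵥ ((Bᴴ * M * B)⁻¹ *ᵥ Pi.single (0 : Fin (k + 1)) (1 : ℂ)))).re))⁻¹ := by
  have hWinj : Function.Injective W.mulVec := Matrix.mulVec_injective_iff.mpr hWrank
  have hBinj : Function.Injective B.mulVec := Matrix.mulVec_injective_iff.mpr hBrank
  have hWpd := aux_posdef hM W hWinj
  have hBpd := aux_posdef hM B hBinj
  have hWdet : IsUnit (Wᴴ * M * W).det := (Matrix.isUnit_iff_isUnit_det _).mp hWpd.isUnit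
  have hBdet : IsUnit (Bᴴ * M * B).det := (Matrix.isUnit_iff_isUnit_det _).mp hBpd.isUnit
  set y : Fin k → ℂ := (Wᴴ * M * W)⁻¹ *ᵥ (Wᴴ *ᵥ (M *ᵥ b)) with hy
  set ρ : ℂ := star r ⬝ᵥ M *ᵥ r with hρ
  have hρpos : 0 < ρ := hM.dotProduct_mulVec_pos hr
  have hρre : 0 < ρ.re := (Complex.lt_def.mp hρpos).1
  have hρim : ρ.im = 0 := ((Complex.lt_def.mp hρpos).2).symm
  have hρeq : ρ = (ρ.re : ℂ) := Complex.ext rfl (by simp [hρim])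
  have hρne : ρ ≠ 0 := ne_of_gt hρpos
  -- W* M r = 0
  have hWr : Wᴴ *ᵥ (M *ᵥ r) = 0 := by
    have h2 : (Wᴴ * M * W) *ᵥ y = Wᴴ *ᵥ (M *ᵥ b) := by
      rw [hy, Matrix.mulVec_mulVec (Wᴴ *ᵥ (M *ᵥ b)) (Wᴴ * M * W) ((Wᴴ * M * W)⁻¹),
        Matrix.mul_nonsing_inv _ hWdet, Matrix.one_mulVec]
    have h2' : (Wᴴ * M * W) *ᵥ y = (Wᴴ * M) *ᵥ b := h2.trans (Matrix.mulVec_mulVec b Wᴴ M)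
    rw [hrdef, Matrix.mulVec_sub, Matrix.mulVec_sub, Matrix.mulVec_mulVec,
      Matrix.mulVec_mulVec, Matrix.mulVec_mulVec, h2', sub_self]
  -- columns description of Bᴴ *ᵥ v
  have hBH : ∀ v : Fin n → ℂ, Bᴴ *ᵥ v = Fin.cons (star b ⬝ᵥ v) (Wᴴ *ᵥ v) := by
    intro v
    funext j
    refine Fin.cases ?_ (fun j' => ?_) j <;>
      simp [hB, Matrix.mulVec, dotProduct, Matrix.conjTranspose_apply]
  -- b* M r = ρ
  have hb' : b = r + W *ᵥ y := by rw [hrdef]; ring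
  have hbr : star b ⬝ᵥ (M *ᵥ r) = ρ := by
    rw [hb', star_add, add_dotProduct, Matrix.star_mulVec, ← Matrix.dotProduct_mulVec,
      hWr, dotProduct_zero, add_zero, hρ]
  -- c with B c = r
  set c : Fin (k + 1) → ℂ := Fin.cons 1 (fun j => -(y j)) with hc
  have hBc : B *ᵥ c = r := by
    funext i
    simp only [hB, hc, Matrix.mulVec, dotProduct, Fin.sum_univ_succ, Matrix.of_apply,
      Fin.cases_zero, Fin.cases_succ, Fin.cons_zero, Fin.cons_succ, mul_one, mul_neg]
    rw [hrdef]
    simp [Matrix.mulVec, dotProduct, sub_eq_add_neg, Finset.sum_neg_distrib]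
  have hNc : (Bᴴ * M * B) *ᵥ c = ρ • (Pi.single (0 : Fin (k + 1)) (1 : ℂ) : Fin (k + 1) → ℂ) := by
    rw [← Matrix.mulVec_mulVec, ← Matrix.mulVec_mulVec, hBc, hBH, hbr, hWr]
    funext j
    refine Fin.cases ?_ (fun j' => ?_) j <;> simp [Pi.single_apply, Fin.succ_ne_zero]
  have hcinv : (Bᴴ * M * B)⁻¹ *ᵥ Pi.single (0 : Fin (k + 1)) (1 : ℂ) = ρ⁻¹ • c := by
    have h := congrArg (fun v => (Bᴴ * M * B)⁻¹ *ᵥ v) hNc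
    simp only [Matrix.mulVec_mulVec, Matrix.nonsing_inv_mul _ hBdet, Matrix.one_mulVec,
      Matrix.mulVec_smul] at h
    rw [h, smul_smul, inv_mul_cancel₀ hρne, one_smul]
  have hx : B *ᵥ ((Bᴴ * M * B)⁻¹ *ᵥ Pi.single (0 : Fin (k + 1)) (1 : ℂ)) = ρ⁻¹ • r := by
    rw [hcinv, Matrix.mulVec_smul, hBc]
  rw [hx]
  have hconj : star ρ = ρ := by
    simp [Complex.ext_iff, hρim]
  have hval : star (ρ⁻¹ • r) ⬝ᵥ M *ᵥ (ρ⁻¹ • r) = ((ρ.re⁻¹ : ℝ) : ℂ) := by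
    rw [star_smul, Matrix.mulVec_smul, smul_dotProduct, dotProduct_smul, ← hρ, smul_smul,
      smul_eq_mul, star_inv₀, hconj]
    have h3 : ρ⁻¹ * ρ⁻¹ * ρ = ρ⁻¹ := by field_simp
    rw [h3, Complex.ofReal_inv]
    exact congrArg Inv.inv hρeq
  rw [hval, Complex.ofReal_re, Real.sqrt_inv, inv_inv]
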